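/- For any rooted binary tree T with n leaves and k = ⌈log₂ n⌉, the Sackin index satisfies S(T) ≥ −2^k + n(k+1). -/

import Mathlib

set_option maxHeartbeats 1000000


/-- Rooted binary trees: a single node (leaf) or a root with two subtrees. -/
inductive BTree : Type
  | leaf : BTree
  | node : BTree → BTree → BTree

namespace BTree

/-- Number of leaves of a rooted binary tree. -/
def leaves : BTree → ℕ
  | leaf => 1
  | node l r => l.leaves + r.leaves

/-- Sum of depths of all leaves, where the root of the tree is at depth `d`. -/
def sackinAux : BTree → ℕ → ℕ
  | leaf, d => d
  | node l r, d => sackinAux l (d + 1) + sackinAux r (d + 1)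

/-- Sackin index: the sum of the depths of all leaves. -/
def sackin (t : BTree) : ℕ := sackinAux t 0

/-- Sum, over all internal nodes `u`, of the number of leaves below `u`. -/
def internalLeafSum : BTree → ℕ
  | leaf => 0
  | node l r => (l.leaves + r.leaves) + internalLeafSum l + internalLeafSum r

/-- Sum, over all nodes `v`, of the number of leaves below `v`. -/
def allNodesLeafSum : BTree → ℕ
  | leaf => 1
  | node l r => (l.leaves + r.leaves) + allNodesLeafSum l + allNodesLeafSum r

/-- Sum, over all non-root nodes `v`, of the number of leaves below `v`. -/
def nonRootLeafSum : BTree → ℕ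
  | leaf => 0
  | node l r => allNodesLeafSum l + allNodesLeafSum r

/-- Height: maximal number of edges on a root-to-leaf path. -/
def height : BTree → ℕ
  | leaf => 0
  | node l r => max l.height r.height + 1

/-- Subtree at a given path from the root (`false` = left child, `true` = right child). -/
def subtreeAt : BTree → List Bool → Option BTree
  | t, [] => some t
  | leaf, _ :: _ => none
  | node l _, false :: p => subtreeAt l p
  | node _ r, true :: p => subtreeAt r p

/-- Number of cherries (pairs of sibling leaves) whose two leaves are at depth `d`. -/
def cherriesAt : BTree → ℕ → ℕ
  | leaf, _ => 0
  | node leaf leaf, d => if d = 1 then 1 else 0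
  | node _ _, 0 => 0
  | node l r, d + 1 => cherriesAt l d + cherriesAt r d

/-- `DeleteCherry t d t'` : `t'` is obtained from `t` by deleting a cherry `[u,v]`
(both leaves at depth `d`) together with the two pendant edges, turning the
parent `w` into a leaf. -/
inductive DeleteCherry : BTree → ℕ → BTree → Prop
  | base : DeleteCherry (BTree.node BTree.leaf BTree.leaf) 1 BTree.leaf
  | left {l l' r : BTree} {d : ℕ} :
      DeleteCherry l d l' → DeleteCherry (BTree.node l r) (d + 1) (BTree.node l' r)
  | right {l r r' : BTree} {d : ℕ} :
      DeleteCherry r d r' → DeleteCherry (BTree.node l r) (d + 1) (BTree.node l r')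

/-- Caterpillar tree with `n` leaves (for `n ≥ 1`): the unique rooted binary tree
with exactly one cherry. -/
def caterpillar : ℕ → BTree
  | 0 => BTree.leaf
  | 1 => BTree.leaf
  | n + 2 => BTree.node (caterpillar (n + 1)) BTree.leaf

/-- Fully balanced tree of height `k`, with `2^k` leaves all at depth `k`. -/
def balanced : ℕ → BTree
  | 0 => BTree.leaf
  | k + 1 => BTree.node (balanced k) (balanced k)

/-- Isomorphism of rooted binary trees (children are unordered). -/
inductive Iso : BTree → BTree → Prop
  | leaf : Iso BTree.leaf BTree.leaf
  | node {a b c d : BTree} : Iso a c → Iso b d → Iso (BTree.node a b) (BTree.node c d)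
  | swap {a b c d : BTree} : Iso a d → Iso b c → Iso (BTree.node a b) (BTree.node c d)

end BTree

open BTree

section Aux

lemma sackinAux_eq (t : BTree) (d : ℕ) : t.sackinAux d = t.sackinAux 0 + d * t.leaves := by
  induction t generalizing d with
  | leaf => simp [BTree.sackinAux, BTree.leaves]
  | node l r ihl ihr =>
    simp only [BTree.sackinAux, BTree.leaves]
    rw [ihl (d+1), ihr (d+1), ihl 1, ihr 1]
    ring

lemma leaves_pos (t : BTree) : 1 ≤ t.leaves := by
  induction t with
  | leaf => simp [BTree.leaves]
  | node l r ihl ihr => simp [BTree.leaves]; omega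


lemma pow_bound (a i m : ℕ) (h1 : a ≤ 2^i) (h2 : i ≤ m) : a*(m-i) + 2^i ≤ 2^m := by
  calc a*(m-i) + 2^i ≤ 2^i*(m-i) + 2^i := by nlinarith
    _ = 2^i * (m-i+1) := by ring
    _ ≤ 2^i * 2^(m-i) := by
        exact Nat.mul_le_mul_left _ (Nat.succ_le_of_lt Nat.lt_two_pow_self)
    _ = 2^m := by rw [← pow_add]; congr 1; omega

lemma key (a b : ℕ) (ha : 1 ≤ a) (hb : 1 ≤ b) :
    (a+b) * (Nat.clog 2 (a+b) + 1) + 2 ^ Nat.clog 2 a + 2 ^ Nat.clog 2 b ≤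
      a * (Nat.clog 2 a + 1) + b * (Nat.clog 2 b + 1) + (a+b) + 2 ^ Nat.clog 2 (a+b) := by
  set ka := Nat.clog 2 a with hka
  set kb := Nat.clog 2 b with hkb
  set k := Nat.clog 2 (a+b) with hk
  have hkak : ka ≤ k := Nat.clog_mono_right 2 (by omega)
  have hkbk : kb ≤ k := Nat.clog_mono_right 2 (by omega)
  have hab : a + b ≤ 2 ^ k := Nat.le_pow_clog one_lt_two _
  have ha2 : a ≤ 2 ^ ka := Nat.le_pow_clog one_lt_two _
  have hb2 : b ≤ 2 ^ kb := Nat.le_pow_clog one_lt_two _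
  have hk1 : 1 ≤ k := Nat.clog_pos one_lt_two (by omega)
  -- lower bounds when clog achieved
  have hlow : ∀ n : ℕ, 2 ≤ n → 2 ^ (Nat.clog 2 n - 1) < n := fun n hn =>
    Nat.pow_pred_clog_lt_self one_lt_two hn
  rcases Nat.lt_or_ge ka k with hA | hA
  · rcases Nat.lt_or_ge kb k with hB | hB
    · -- both < k
      have b1 := pow_bound a ka (k-1) ha2 (by omega)
      have b2 := pow_bound b kb (k-1) hb2 (by omega)
      have e : 2^(k-1) + 2^(k-1) = 2^k := by
        rw [← two_mul, ← pow_succ']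
        congr 1; omega
      have e1 : a * (k - ka) = a * (k - ka - 1) + a := by
        obtain ⟨d, hd⟩ : ∃ d, k - ka = d + 1 := ⟨k - ka - 1, by omega⟩
        have hd' : k - ka - 1 = d := by omega
        rw [hd]; simp [Nat.mul_succ]
      have e2 : b * (k - kb) = b * (k - kb - 1) + b := by
        obtain ⟨d, hd⟩ : ∃ d, k - kb = d + 1 := ⟨k - kb - 1, by omega⟩
        have hd' : k - kb - 1 = d := by omega
        rw [hd]; simp [Nat.mul_succ]
      have f1 : a * k = a * ka + a * (k - ka) := by
        rw [← Nat.mul_add]; congr 1; omega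
      have f2 : b * k = b * kb + b * (k - kb) := by
        rw [← Nat.mul_add]; congr 1; omega
      have g1 : a * (k - 1 - ka) = a * (k - ka - 1) := by congr 1; omega
      have g2 : b * (k - 1 - kb) = b * (k - kb - 1) := by congr 1; omega
      rw [g1] at b1; rw [g2] at b2
      nlinarith
    · -- kb = k, ka < k
      have hkbk' : kb = k := le_antisymm hkbk hB
      have hbn : 2 ≤ b := by
        by_contra h
        have hb1 : b = 1 := by omega
        have : kb = 0 := by rw [hkb, hb1]; simp
        omega
      have hbig : 2^(k-1) < b := by
        have := hlow b hbn; rw [← hkb] at this; rwa [hkbk'] at this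
      have b1 := pow_bound a ka (k-1) ha2 (by omega)
      have g1 : a * (k - 1 - ka) = a * (k - ka - 1) := by congr 1; omega
      rw [g1] at b1
      have e1 : a * (k - ka) = a * (k - ka - 1) + a := by
        obtain ⟨d, hd⟩ : ∃ d, k - ka = d + 1 := ⟨k - ka - 1, by omega⟩
        have hd' : k - ka - 1 = d := by omega
        rw [hd]; simp [Nat.mul_succ]
      have f1 : a * k = a * ka + a * (k - ka) := by
        rw [← Nat.mul_add]; congr 1; omega
      rw [hkbk']
      nlinarith
  · have hkak' : ka = k := le_antisymm hkak hA
    rcases Nat.lt_or_ge kb k with hB | hB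
    · -- ka = k, kb < k (symmetric)
      have han : 2 ≤ a := by
        by_contra h
        have ha1 : a = 1 := by omega
        have : ka = 0 := by rw [hka, ha1]; simp
        omega
      have hbig : 2^(k-1) < a := by
        have := hlow a han; rw [← hka] at this; rwa [hkak'] at this
      have b2 := pow_bound b kb (k-1) hb2 (by omega)
      have g2 : b * (k - 1 - kb) = b * (k - kb - 1) := by congr 1; omega
      rw [g2] at b2
      have e2 : b * (k - kb) = b * (k - kb - 1) + b := by
        obtain ⟨d, hd⟩ : ∃ d, k - kb = d + 1 := ⟨k - kb - 1, by omega⟩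
        have hd' : k - kb - 1 = d := by omega
        rw [hd]; simp [Nat.mul_succ]
      have f2 : b * k = b * kb + b * (k - kb) := by
        rw [← Nat.mul_add]; congr 1; omega
      rw [hkak']
      nlinarith
    · -- both = k : contradiction
      exfalso
      have hkbk' : kb = k := le_antisymm hkbk hB
      have han : 2 ≤ a := by
        by_contra h
        have ha1 : a = 1 := by omega
        have : ka = 0 := by rw [hka, ha1]; simp
        omega
      have hbn : 2 ≤ b := by
        by_contra h
        have hb1 : b = 1 := by omega
        have : kb = 0 := by rw [hkb, hb1]; simp
        omega
      have h1 : 2^(k-1) < a := by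
        have := hlow a han; rw [← hka] at this; rwa [hkak'] at this
      have h2 : 2^(k-1) < b := by
        have := hlow b hbn; rw [← hkb] at this; rwa [hkbk'] at this
      have e : 2^(k-1) + 2^(k-1) = 2^k := by
        rw [← two_mul, ← pow_succ']
        congr 1; omega
      omega


end Aux

/-- `S(T) ≥ −2^k + n(k+1)` with `k = ⌈log₂ n⌉` (stated additively
in `ℕ`). -/
theorem stmt9 (t : BTree) :
    t.leaves * (Nat.clog 2 t.leaves + 1) ≤ t.sackin + 2 ^ Nat.clog 2 t.leaves := by
  induction t with
  | leaf => simp [BTree.leaves, BTree.sackin, BTree.sackinAux]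
  | node l r ihl ihr =>
    have hl := leaves_pos l
    have hr := leaves_pos r
    have hs : (BTree.node l r).sackin = l.sackin + r.sackin + (l.leaves + r.leaves) := by
      simp only [BTree.sackin, BTree.sackinAux]
      rw [sackinAux_eq l 1, sackinAux_eq r 1]
      simp [BTree.sackin]
      ring
    have hle : (BTree.node l r).leaves = l.leaves + r.leaves := rfl
    have hkey := key l.leaves r.leaves hl hr
    rw [hle, hs]
    omega
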